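/- Let 0 < r ≤ p ≤ 1 with r ≠ 1 (so r < 1), let q = p, let v be a weight on (0,∞), u ∈ Ω̃_r and w ∈ Ω_p. Define ω₂(x) := (∫_x^∞ w(s)^p ds)^{1/p} v(x). Then for every nonnegative measurable f on (0,∞), ‖f‖_{M(Cop_r(u), Ces_{p,p}(w,v))} ≈ sup_{t∈(0,∞)} (∫_0^t u(s)^r ds)^{−1/r} ‖f·ω₂‖_{p',(0,t)}, with equivalence constants depending only on p and r. -/

import Mathlib

open MeasureTheory ENNReal Set Filter

/-- `‖f‖_{p,s}`: the Lebesgue functional `(∫_s f^p)^{1/p}` for `p < ∞`,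
and `esssup_s f` for `p = ∞`. -/
noncomputable def wNorm (p : ℝ≥0∞) (f : ℝ → ℝ≥0∞) (s : Set ℝ) : ℝ≥0∞ :=
  if p = ∞ then essSup f (volume.restrict s)
  else (∫⁻ x in s, f x ^ p.toReal) ^ (1 / p.toReal)

/-- The weighted Cesàro functional `‖f‖_{Ces_{p,q}(u,v)} = ‖ t ↦ ‖f‖_{p,v,(0,t)} ‖_{q,u,(0,∞)}`. -/
noncomputable def cesaroNorm (p q : ℝ≥0∞) (u v : ℝ → ℝ≥0∞) (f : ℝ → ℝ≥0∞) : ℝ≥0∞ :=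
  wNorm q (fun t => wNorm p (fun x => f x * v x) (Ioo 0 t) * u t) (Ioi 0)

/-- The weighted Copson functional `‖f‖_{Cop_{p,q}(u,v)} = ‖ t ↦ ‖f‖_{p,v,(t,∞)} ‖_{q,u,(0,∞)}`. -/
noncomputable def copsonNorm (p q : ℝ≥0∞) (u v : ℝ → ℝ≥0∞) (f : ℝ → ℝ≥0∞) : ℝ≥0∞ :=
  wNorm q (fun t => wNorm p (fun x => f x * v x) (Ioi t) * u t) (Ioi 0)

/-- The multiplier functional `‖f‖_{M(X,Y)} = sup { ‖f·g‖_Y / ‖g‖_X :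
g nonnegative measurable, g not a.e. zero on (0,∞) }`. -/
noncomputable def multNorm (X Y : (ℝ → ℝ≥0∞) → ℝ≥0∞) (f : ℝ → ℝ≥0∞) : ℝ≥0∞ :=
  ⨆ (g : ℝ → ℝ≥0∞) (_ : Measurable g ∧
      ¬ (∀ᵐ x ∂(volume.restrict (Ioi (0:ℝ))), g x = 0)),
    Y (fun x => f x * g x) / X g

/-- A weight on `(0,∞)`: measurable, positive and finite a.e. on `(0,∞)`. -/
def IsWeightOn (v : ℝ → ℝ≥0∞) : Prop :=
  Measurable v ∧ ∀ᵐ x ∂(volume.restrict (Ioi (0:ℝ))), 0 < v x ∧ v x < ∞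

/-- `u ∈ Ω_q`: `0 < ‖u‖_{q,(t,∞)} < ∞` for all `t > 0`. -/
def MemOmega (q : ℝ≥0∞) (u : ℝ → ℝ≥0∞) : Prop :=
  Measurable u ∧ ∀ t : ℝ, 0 < t → 0 < wNorm q u (Ioi t) ∧ wNorm q u (Ioi t) < ∞

/-- `u ∈ Ω̃_q`: `0 < ‖u‖_{q,(0,t)} < ∞` for all `t > 0`. -/
def MemOmegaDual (q : ℝ≥0∞) (u : ℝ → ℝ≥0∞) : Prop :=
  Measurable u ∧ ∀ t : ℝ, 0 < t → 0 < wNorm q u (Ioo 0 t) ∧ wNorm q u (Ioo 0 t) < ∞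

/-- The exponent `p'`: `p/(1−p)` if `p < 1`, `∞` if `p = 1`, `p/(p−1)` if `p > 1`. -/
noncomputable def dualExp (p : ℝ) : ℝ≥0∞ :=
  if p < 1 then ENNReal.ofReal (p / (1 - p))
  else if p = 1 then ∞
  else ENNReal.ofReal (p / (p - 1))

/-- An admissible function: continuous and strictly increasing on `[0,∞)`,
vanishing at `0` and tending to `∞` at `∞`. -/
def AdmissibleFn (U : ℝ → ℝ≥0∞) : Prop :=
  ContinuousOn U (Ici 0) ∧ StrictMonoOn U (Ici 0) ∧ U 0 = 0 ∧
    Tendsto U atTop (nhds ∞)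

/-- φ is equivalent to ψ on `(0,∞)` up to multiplicative constants. -/
def EquivOn (φ ψ : ℝ → ℝ≥0∞) : Prop :=
  ∃ c C : ℝ≥0∞, 0 < c ∧ C < ∞ ∧ ∀ x ∈ Ioi (0:ℝ), c * ψ x ≤ φ x ∧ φ x ≤ C * ψ x

/-- `φ ∈ Q_U`: φ is non-degenerate and `U`-quasiconcave, i.e. φ is equivalent to a
nondecreasing function on `(0,∞)`, `φ/U` is equivalent to a nonincreasing function on
`(0,∞)`, and `lim_{t→0+} φ(t) = lim_{t→∞} 1/φ(t) = lim_{t→∞} φ(t)/U(t)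
= lim_{t→0+} U(t)/φ(t) = 0`. -/
def MemQClass (U φ : ℝ → ℝ≥0∞) : Prop :=
  (∃ ψ : ℝ → ℝ≥0∞, MonotoneOn ψ (Ioi 0) ∧ EquivOn φ ψ) ∧
  (∃ ψ : ℝ → ℝ≥0∞, AntitoneOn ψ (Ioi 0) ∧ EquivOn (fun x => φ x / U x) ψ) ∧
  Tendsto φ (nhdsWithin 0 (Ioi 0)) (nhds 0) ∧
  Tendsto (fun t => (φ t)⁻¹) atTop (nhds 0) ∧
  Tendsto (fun t => φ t / U t) atTop (nhds 0) ∧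
  Tendsto (fun t => U t / φ t) (nhdsWithin 0 (Ioi 0)) (nhds 0)


section AuxMult

open Real MeasureTheory ENNReal Set Filter

lemma wNorm_top (f : ℝ → ℝ≥0∞) (s : Set ℝ) :
    wNorm ∞ f s = essSup f (volume.restrict s) := if_pos rfl

lemma wNorm_ne_top {p : ℝ≥0∞} (hp : p ≠ ∞) (f : ℝ → ℝ≥0∞) (s : Set ℝ) :
    wNorm p f s = (∫⁻ x in s, f x ^ p.toReal) ^ (1 / p.toReal) := if_neg hp

lemma aux_rpow_iSup {s : ℝ} (hs : 0 < s) (x : ℕ → ℝ≥0∞) :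
    (⨆ n, x n) ^ s = ⨆ n, x n ^ s := by
  apply le_antisymm
  · have hxb : ∀ n, x n ≤ (⨆ n, x n ^ s) ^ s⁻¹ := fun n => by
      have h1 : x n = (x n ^ s) ^ s⁻¹ := by
        rw [← ENNReal.rpow_mul, mul_inv_cancel₀ hs.ne', ENNReal.rpow_one]
      rw [h1]
      exact ENNReal.rpow_le_rpow (le_iSup (fun n => x n ^ s) n) (by positivity)
    calc (⨆ n, x n) ^ s ≤ ((⨆ n, x n ^ s) ^ s⁻¹) ^ s :=
          ENNReal.rpow_le_rpow (iSup_le hxb) hs.le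
      _ = ⨆ n, x n ^ s := by
          rw [← ENNReal.rpow_mul, inv_mul_cancel₀ hs.ne', ENNReal.rpow_one]
  · exact iSup_le fun n => ENNReal.rpow_le_rpow (le_iSup x n) hs.le

lemma aux_tsum_rpow {s : ℝ} (hs : 1 ≤ s) (b : ℤ → ℝ≥0∞) :
    ∑' k, b k ^ s ≤ (∑' k, b k) ^ s := by
  have hs0 : 0 < s := lt_of_lt_of_le one_pos hs
  set T := ∑' k, b k with hT
  rcases eq_or_ne T 0 with h0 | h0
  · have hb : ∀ k, b k = 0 := by
      intro k
      have := ENNReal.le_tsum (f := b) k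
      rw [← hT, h0] at this
      exact le_antisymm this zero_le
    simp [hb, ENNReal.zero_rpow_of_pos hs0]
  rcases eq_or_ne T ∞ with htop | htop
  · rw [htop, ENNReal.top_rpow_of_pos hs0]; exact le_top
  have hbk : ∀ k, b k ^ s ≤ b k * T ^ (s - 1) := fun k => by
    calc b k ^ s = b k ^ (1 + (s - 1)) := by ring_nf
      _ = b k ^ (1:ℝ) * b k ^ (s-1) :=
          ENNReal.rpow_add_of_nonneg _ _ zero_le_one (by linarith)
      _ ≤ b k ^ (1:ℝ) * T ^ (s-1) := by
          exact mul_le_mul_right (ENNReal.rpow_le_rpow (ENNReal.le_tsum k) (by linarith)) _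
      _ = b k * T ^ (s-1) := by rw [ENNReal.rpow_one]
  calc ∑' k, b k ^ s ≤ ∑' k, b k * T ^ (s-1) := ENNReal.tsum_le_tsum hbk
    _ = T * T ^ (s - 1) := by rw [ENNReal.tsum_mul_right]
    _ = T ^ (1:ℝ) * T ^ (s-1) := by rw [ENNReal.rpow_one]
    _ = T ^ s := by rw [← ENNReal.rpow_add_of_nonneg _ _ zero_le_one (by linarith)]; ring_nf
  
lemma wNorm_mono_set (q : ℝ≥0∞) (f : ℝ → ℝ≥0∞) {A B : Set ℝ} (hAB : A ⊆ B) :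
    wNorm q f A ≤ wNorm q f B := by
  unfold wNorm; split
  · exact essSup_mono_measure (Measure.absolutelyContinuous_of_le
      (Measure.restrict_mono hAB le_rfl))
  · exact ENNReal.rpow_le_rpow (lintegral_mono_set hAB)
      (div_nonneg zero_le_one ENNReal.toReal_nonneg)

lemma wNorm_congr_set (q : ℝ≥0∞) (f : ℝ → ℝ≥0∞) {A B : Set ℝ} (h : A =ᵐ[volume] B) :
    wNorm q f A = wNorm q f B := by
  unfold wNorm; rw [Measure.restrict_congr_set h]

lemma dualExp_one : dualExp 1 = ∞ := by simp [dualExp]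

lemma dualExp_lt_one {p : ℝ} (hp1 : p < 1) : dualExp p = ENNReal.ofReal (p / (1 - p)) := by
  simp [dualExp, hp1]


lemma holder_local {p : ℝ} (hp : 0 < p) (hp1 : p ≤ 1) {A : Set ℝ} {h g : ℝ → ℝ≥0∞}
    (hh : Measurable h) (hg : Measurable g) {M : ℝ≥0∞}
    (hM : wNorm (dualExp p) h A ≤ M) :
    ∫⁻ x in A, h x ^ p * g x ^ p ≤ (M * ∫⁻ x in A, g x) ^ p := by
  rcases eq_or_lt_of_le hp1 with hp1' | hp1'
  · -- p = 1
    subst hp1'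
    rw [dualExp_one] at hM
    unfold wNorm at hM
    rw [if_pos rfl] at hM
    simp only [ENNReal.rpow_one]
    have hae : ∀ᵐ x ∂(volume.restrict A), h x * g x ≤ M * g x := by
      filter_upwards [ENNReal.ae_le_essSup (μ := volume.restrict A) h] with x hx
      exact mul_le_mul_left (hx.trans hM) _
    calc ∫⁻ x in A, h x * g x ≤ ∫⁻ x in A, M * g x := lintegral_mono_ae hae
      _ = M * ∫⁻ x in A, g x := lintegral_const_mul M hg
  · -- p < 1
    set q : ℝ := p / (1 - p) with hqdef
    have h1p : 0 < 1 - p := by linarith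
    have hq : 0 < q := div_pos hp h1p
    rw [dualExp_lt_one hp1'] at hM
    unfold wNorm at hM
    rw [if_neg ENNReal.ofReal_ne_top, ENNReal.toReal_ofReal hq.le] at hM
    have hIq : ∫⁻ x in A, h x ^ q ≤ M ^ q := by
      have h2 := ENNReal.rpow_le_rpow hM hq.le
      rwa [← ENNReal.rpow_mul, one_div_mul_cancel hq.ne', ENNReal.rpow_one] at h2
    have hconj : Real.HolderConjugate (1/(1-p)) (1/p) := by
      rw [Real.holderConjugate_iff]; constructor
      · rw [lt_div_iff₀ h1p]; linarith
      · rw [one_div, one_div, inv_inv, inv_inv]; ring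
    calc ∫⁻ x in A, h x ^ p * g x ^ p
        = ∫⁻ x in A, ((fun x => h x ^ p) * fun x => g x ^ p) x := by
          simp [Pi.mul_apply]
      _ ≤ (∫⁻ x in A, (h x ^ p) ^ (1/(1-p))) ^ (1/(1/(1-p))) *
          (∫⁻ x in A, (g x ^ p) ^ (1/p)) ^ (1/(1/p)) :=
          ENNReal.lintegral_mul_le_Lp_mul_Lq _ hconj
            (hh.pow_const p).aemeasurable (hg.pow_const p).aemeasurable
      _ = (∫⁻ x in A, h x ^ q) ^ (1-p) * (∫⁻ x in A, g x) ^ p := by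
          rw [one_div_one_div, one_div_one_div]
          congr 1
          · congr 1
            refine lintegral_congr fun x => ?_
            rw [← ENNReal.rpow_mul]
            congr 1
            rw [hqdef, mul_one_div]
          · congr 1
            refine lintegral_congr fun x => ?_
            rw [← ENNReal.rpow_mul, mul_one_div_cancel hp.ne', ENNReal.rpow_one]
      _ ≤ (M ^ q) ^ (1-p) * (∫⁻ x in A, g x) ^ p :=
          mul_le_mul_left (ENNReal.rpow_le_rpow hIq h1p.le) _
      _ = M ^ p * (∫⁻ x in A, g x) ^ p := by
          rw [← ENNReal.rpow_mul]
          congr 1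
          rw [hqdef, div_mul_cancel₀ _ h1p.ne']
      _ = (M * ∫⁻ x in A, g x) ^ p := (ENNReal.mul_rpow_of_nonneg _ _ hp.le).symm


/-- Claim 1: norm of `h` over an initial segment defined by a level of `U`. -/
lemma claim1 {p r : ℝ} (hp : 0 < p) (hp1 : p ≤ 1) (hr : 0 < r) {u h : ℝ → ℝ≥0∞}
    (hu : Measurable u) (hh : Measurable h) {S : ℝ≥0∞}
    (hS : ∀ t : ℝ, 0 < t →
      wNorm (dualExp p) h (Ioo 0 t) ≤ S * (∫⁻ s in Ioo 0 t, u s ^ r) ^ (1/r))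
    (lam : ℝ≥0∞) :
    wNorm (dualExp p) h {x : ℝ | 0 < x ∧ (∫⁻ s in Ioo 0 x, u s ^ r) < lam}
      ≤ S * lam ^ (1/r) := by
  set U : ℝ → ℝ≥0∞ := fun t => ∫⁻ s in Ioo 0 t, u s ^ r with hUdef
  have hUmono : Monotone U := fun a b hab =>
    lintegral_mono_set (Ioo_subset_Ioo le_rfl hab)
  have hUmeas : Measurable U := hUmono.measurable
  set A := {x : ℝ | 0 < x ∧ U x < lam} with hAdef
  have hAmeas : MeasurableSet A := by
    have : A = Ioi 0 ∩ U ⁻¹' (Iio lam) := by ext x; simp [hAdef, and_comm]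
    rw [this]; exact measurableSet_Ioi.inter (hUmeas measurableSet_Iio)
  set M := S * lam ^ (1/r) with hMdef
  have hbound : ∀ y, y ∈ A → wNorm (dualExp p) h (Ioo 0 y) ≤ M := fun y hy =>
    (hS y hy.1).trans (mul_le_mul_right
      (ENNReal.rpow_le_rpow hy.2.le (by positivity)) S)
  rcases A.eq_empty_or_nonempty with hAe | hAne
  · -- empty
    rw [hAe]
    unfold wNorm
    split
    · rw [Measure.restrict_empty, essSup_measure_zero]; exact zero_le
    · rename_i hde
      have hp1' : p < 1 := by
        rcases eq_or_lt_of_le hp1 with h | h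
        · exact absurd (h ▸ dualExp_one) hde
        · exact h
      have h1p : 0 < 1 - p := by linarith
      have hq : 0 < p / (1 - p) := div_pos hp h1p
      rw [Measure.restrict_empty, lintegral_zero_measure,
        ENNReal.zero_rpow_of_pos]
      · exact zero_le
      · rw [dualExp_lt_one hp1', ENNReal.toReal_ofReal hq.le]; positivity
  · -- nonempty
    have hmax : ∀ a b : ℝ, a ∈ A → b ∈ A → max a b ∈ A := fun a b ha hb => by
      rcases max_choice a b with hc | hc <;> rw [hc] <;> assumption
    have hseq : ∃ z : ℕ → ℝ, (∀ n, z n ∈ A) ∧ ∀ x ∈ A, ∃ n, x ≤ z n := by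
      by_cases hbdd : BddAbove A
      · by_cases hin : sSup A ∈ A
        · exact ⟨fun _ => sSup A, fun _ => hin, fun x hx => ⟨0, le_csSup hbdd hx⟩⟩
        · have hy : ∀ n : ℕ, ∃ y ∈ A, sSup A - 1/(n+1) < y := fun n =>
            exists_lt_of_lt_csSup hAne (by
              have : (0:ℝ) < 1/(n+1) := by positivity
              linarith)
          choose y hyA hylt using hy
          refine ⟨y, hyA, fun x hx => ?_⟩
          have hxlt : x < sSup A :=
            lt_of_le_of_ne (le_csSup hbdd hx) (fun he => hin (he ▸ hx))
          obtain ⟨n, hn⟩ := exists_nat_one_div_lt (sub_pos.mpr hxlt)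
          exact ⟨n, by have := hylt n; linarith⟩
      · have hy : ∀ n : ℕ, ∃ y ∈ A, (n:ℝ) < y := fun n => by
          by_contra hcon
          push_neg at hcon
          exact hbdd ⟨n, fun x hx => hcon x hx⟩
        choose y hyA hylt using hy
        refine ⟨y, hyA, fun x hx => ?_⟩
        obtain ⟨n, hn⟩ := exists_nat_gt x
        exact ⟨n, (hn.trans (hylt n)).le⟩
    obtain ⟨z, hzA, hzcov⟩ := hseq
    -- monotonize
    set Z : ℕ → ℝ := fun n => Nat.rec (z 0) (fun n ih => max ih (z (n+1))) n with hZdef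
    have hZsucc : ∀ n, Z (n+1) = max (Z n) (z (n+1)) := fun n => rfl
    have hZA : ∀ n, Z n ∈ A := by
      intro n; induction n with
      | zero => exact hzA 0
      | succ n ih => rw [hZsucc]; exact hmax _ _ ih (hzA (n+1))
    have hZmono : Monotone Z := monotone_nat_of_le_succ fun n => by
      rw [hZsucc]; exact le_max_left _ _
    have hZge : ∀ n, z n ≤ Z n := fun n => by
      cases n with
      | zero => exact le_rfl
      | succ n => rw [hZsucc]; exact le_max_right _ _
    have hcover : A ⊆ ⋃ n, Ioc 0 (Z n) := fun x hx => by
      obtain ⟨n, hn⟩ := hzcov x hx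
      exact mem_iUnion.mpr ⟨n, ⟨hx.1, hn.trans (hZge n)⟩⟩
    have hIoc : ∀ n, wNorm (dualExp p) h (Ioc 0 (Z n)) ≤ M := fun n => by
      rw [← wNorm_congr_set (dualExp p) h (Ioo_ae_eq_Ioc (a := (0:ℝ)) (b := Z n))]
      exact hbound _ (hZA n)
    rcases eq_or_lt_of_le hp1 with hp1' | hp1'
    · -- p = 1 : essSup case
      subst hp1'
      rw [dualExp_one] at hIoc ⊢
      simp only [wNorm_top] at hIoc ⊢
      have hbadmeas : MeasurableSet {x : ℝ | ¬ h x ≤ M} := by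
        have : {x : ℝ | ¬ h x ≤ M} = {x | M < h x} := by ext x; simp
        rw [this]
        exact measurableSet_lt measurable_const hh
      have hn0 : ∀ n, volume ({x | ¬ h x ≤ M} ∩ Ioc 0 (Z n)) = 0 := fun n => by
        have h1 : ∀ᵐ x ∂(volume.restrict (Ioc 0 (Z n))), h x ≤ M := by
          filter_upwards [ENNReal.ae_le_essSup (μ := volume.restrict (Ioc 0 (Z n))) h]
            with x hx
          exact hx.trans (hIoc n)
        rw [ae_iff] at h1
        rwa [Measure.restrict_apply hbadmeas] at h1
      have hA0 : volume ({x | ¬ h x ≤ M} ∩ A) = 0 := by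
        refine measure_mono_null ?_ (measure_iUnion_null hn0)
        rintro x ⟨hbx, hAx⟩
        obtain ⟨n, hn⟩ := mem_iUnion.mp (hcover hAx)
        exact mem_iUnion.mpr ⟨n, ⟨hbx, hn⟩⟩
      refine essSup_le_of_ae_le M ?_
      rw [EventuallyLE, ae_iff]
      rwa [Measure.restrict_apply hbadmeas]
    · -- p < 1
      set q : ℝ := p / (1 - p) with hqdef
      have h1p : 0 < 1 - p := by linarith
      have hq : 0 < q := div_pos hp h1p
      rw [dualExp_lt_one hp1'] at hIoc ⊢
      simp only [wNorm_ne_top ENNReal.ofReal_ne_top, ← hqdef,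
        ENNReal.toReal_ofReal hq.le] at hIoc ⊢
      set μh := volume.withDensity (fun x => h x ^ q) with hμhdef
      have hμh : ∀ B : Set ℝ, MeasurableSet B → μh B = ∫⁻ x in B, h x ^ q :=
        fun B hB => withDensity_apply _ hB
      have key : ∫⁻ x in A, h x ^ q ≤ M ^ q := by
        rw [← hμh A hAmeas]
        calc μh A ≤ μh (⋃ n, Ioc 0 (Z n)) := measure_mono hcover
          _ = ⨆ n, μh (Ioc 0 (Z n)) := by
            have hmono : Monotone (fun n => Ioc (0:ℝ) (Z n)) := fun a b hab =>
              Ioc_subset_Ioc le_rfl (hZmono hab)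
            exact hmono.directed_le.measure_iUnion
          _ ≤ M ^ q := by
            refine iSup_le fun n => ?_
            rw [hμh _ measurableSet_Ioc]
            have h2 := ENNReal.rpow_le_rpow (hIoc n) hq.le
            rwa [← ENNReal.rpow_mul, one_div_mul_cancel hq.ne',
              ENNReal.rpow_one] at h2
      calc (∫⁻ x in A, h x ^ q) ^ (1/q) ≤ (M ^ q) ^ (1/q) :=
            ENNReal.rpow_le_rpow key (by positivity)
        _ = M := by
            rw [← ENNReal.rpow_mul, mul_one_div_cancel hq.ne', ENNReal.rpow_one]

/-- Bottom-interval bound. -/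
lemma bottom_bound {r : ℝ} (hr : 0 < r) {u g : ℝ → ℝ≥0∞} (hu : Measurable u)
    (hg : Measurable g) {lam : ℝ≥0∞}
    (hlow : ∀ x : ℝ, 0 < x → lam ≤ ∫⁻ s in Ioo 0 x, u s ^ r) :
    lam * (∫⁻ x in Ioi (0:ℝ), g x) ^ r
      ≤ ∫⁻ t in Ioi (0:ℝ), (∫⁻ x in Ioi t, g x) ^ r * u t ^ r := by
  set X := ∫⁻ t in Ioi (0:ℝ), (∫⁻ x in Ioi t, g x) ^ r * u t ^ r with hX
  have hstep : ∀ ε : ℝ, 0 < ε → lam * (∫⁻ x in Ioi ε, g x) ^ r ≤ X := by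
    intro ε hε
    set C := (∫⁻ x in Ioi ε, g x) ^ r with hC
    calc lam * C ≤ (∫⁻ s in Ioo 0 ε, u s ^ r) * C :=
          mul_le_mul_left (hlow ε hε) C
      _ = ∫⁻ s in Ioo 0 ε, u s ^ r * C := (lintegral_mul_const C (hu.pow_const r)).symm
      _ ≤ ∫⁻ s in Ioo 0 ε, (∫⁻ x in Ioi s, g x) ^ r * u s ^ r := by
          refine lintegral_mono_ae ((ae_restrict_iff' measurableSet_Ioo).mpr
            (ae_of_all _ fun s hs => ?_))
          rw [mul_comm]
          refine mul_le_mul_left (ENNReal.rpow_le_rpow ?_ hr.le) _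
          exact lintegral_mono_set (Ioi_subset_Ioi hs.2.le)
      _ ≤ X := lintegral_mono_set Ioo_subset_Ioi_self
  have hG : (∫⁻ x in Ioi (0:ℝ), g x) = ⨆ n : ℕ, ∫⁻ x in Ioi (1/(n+1) : ℝ), g x := by
    set μg := volume.withDensity g with hμg
    have h1 : ∀ s : Set ℝ, MeasurableSet s → μg s = ∫⁻ x in s, g x :=
      fun s hs => withDensity_apply _ hs
    have h2 : Ioi (0:ℝ) = ⋃ n : ℕ, Ioi (1/(n+1) : ℝ) := by
      ext x
      simp only [mem_Ioi, mem_iUnion]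
      constructor
      · intro hx; obtain ⟨n, hn⟩ := exists_nat_one_div_lt hx; exact ⟨n, hn⟩
      · rintro ⟨n, hn⟩; exact lt_trans (by positivity) hn
    have hmono : Monotone (fun n : ℕ => Ioi (1/(n+1) : ℝ)) := fun a b hab =>
      Ioi_subset_Ioi (by
        apply one_div_le_one_div_of_le (by positivity)
        exact_mod_cast by exact_mod_cast add_le_add_left (Nat.cast_le.mpr hab) 1)
    rw [← h1 _ measurableSet_Ioi, h2, hmono.directed_le.measure_iUnion]
    exact iSup_congr fun n => h1 _ measurableSet_Ioi
  rw [hG, aux_rpow_iSup hr, ENNReal.mul_iSup]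
  exact iSup_le fun n => hstep _ (by positivity)

/-- Left continuity bound for `U`. -/
lemma Ulc {r : ℝ} {u : ℝ → ℝ≥0∞} (hu : Measurable u) {t : ℝ} (ht : 0 < t) {c : ℝ≥0∞}
    (hb : ∀ x : ℝ, 0 < x → x < t → (∫⁻ s in Ioo 0 x, u s ^ r) ≤ c) :
    (∫⁻ s in Ioo 0 t, u s ^ r) ≤ c := by
  set μu := volume.withDensity (fun s => u s ^ r) with hμudef
  have hμu : ∀ s : Set ℝ, MeasurableSet s → μu s = ∫⁻ x in s, u x ^ r :=
    fun s hs => withDensity_apply _ hs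
  set sn : ℕ → ℝ := fun n => t - t/(n+2) with hsndef
  have hsn_pos : ∀ n, 0 < sn n := by
    intro n
    have h1 : t/(n+2) < t := by
      rw [div_lt_iff₀ (by positivity)]
      nlinarith [ht]
    simp only [hsndef]; linarith
  have hsn_lt : ∀ n, sn n < t := by
    intro n
    have h1 : 0 < t/(n+2) := by positivity
    simp only [hsndef]; linarith
  have hsn_mono : Monotone sn := by
    intro a b hab
    simp only [hsndef]
    have : t/(b+2) ≤ t/(a+2) := by
      apply div_le_div_of_nonneg_left ht.le (by positivity)
      push_cast
      have := (Nat.cast_le (α := ℝ)).mpr hab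
      linarith
    linarith
  have hunion : Ioo 0 t = ⋃ n, Ioo 0 (sn n) := by
    ext x
    simp only [mem_Ioo, mem_iUnion]
    constructor
    · rintro ⟨hx0, hxt⟩
      obtain ⟨n, hn⟩ := exists_nat_one_div_lt (div_pos (sub_pos.mpr hxt) ht)
      refine ⟨n, hx0, ?_⟩
      have h1 : t * (1/(n+1) : ℝ) < t * ((t-x)/t) := by
        apply mul_lt_mul_of_pos_left hn ht
      rw [mul_div_cancel₀ _ ht.ne'] at h1
      have h2 : t/(n+2) ≤ t * (1/(n+1) : ℝ) := by
        rw [mul_one_div]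
        apply div_le_div_of_nonneg_left ht.le (by positivity)
        push_cast; linarith
      simp only [hsndef]; linarith
    · rintro ⟨n, hx0, hxs⟩
      exact ⟨hx0, hxs.trans (hsn_lt n)⟩
  have hmono2 : Monotone (fun n => Ioo (0:ℝ) (sn n)) := fun a b hab =>
    Ioo_subset_Ioo le_rfl (hsn_mono hab)
  have hdir : Directed (· ⊆ ·) (fun n => Ioo (0:ℝ) (sn n)) := hmono2.directed_le
  calc (∫⁻ s in Ioo 0 t, u s ^ r) = μu (Ioo 0 t) := (hμu _ measurableSet_Ioo).symm
    _ = ⨆ n, μu (Ioo 0 (sn n)) := by rw [hunion]; exact hdir.measure_iUnion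
    _ ≤ c := by
        refine iSup_le fun n => ?_
        rw [hμu _ measurableSet_Ioo]
        exact hb _ (hsn_pos n) (hsn_lt n)

/-- Right continuity bound for `U`. -/
lemma Urc {r : ℝ} {u : ℝ → ℝ≥0∞} (hu : Measurable u) {t : ℝ} (ht : 0 < t)
    (hfin : (∫⁻ s in Ioo 0 (t+1), u s ^ r) ≠ ∞) {c : ℝ≥0∞}
    (hb : ∀ x : ℝ, t < x → c ≤ ∫⁻ s in Ioo 0 x, u s ^ r) :
    c ≤ ∫⁻ s in Ioo 0 t, u s ^ r := by
  set μu := volume.withDensity (fun s => u s ^ r) with hμudef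
  have hμu : ∀ s : Set ℝ, MeasurableSet s → μu s = ∫⁻ x in s, u x ^ r :=
    fun s hs => withDensity_apply _ hs
  set Dn : ℕ → Set ℝ := fun n => Ioo 0 (t + 1/(n+1)) with hDndef
  have hinter : ⋂ n, Dn n = Ioc 0 t := by
    ext x
    simp only [hDndef, mem_Ioo, mem_iInter, mem_Ioc]
    constructor
    · intro hx
      refine ⟨(hx 0).1, ?_⟩
      by_contra hcon
      push_neg at hcon
      obtain ⟨n, hn⟩ := exists_nat_one_div_lt (sub_pos.mpr hcon)
      have := (hx n).2
      linarith
    · rintro ⟨hx0, hxt⟩ n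
      have : (0:ℝ) < 1/(n+1) := by positivity
      exact ⟨hx0, by linarith⟩
  have hanti : ∀ a b : ℕ, a ≤ b → Dn b ⊆ Dn a := by
    intro a b hab
    apply Ioo_subset_Ioo le_rfl
    have : (1:ℝ)/(b+1) ≤ 1/(a+1) := by
      apply div_le_div_of_nonneg_left zero_le_one (by positivity)
      push_cast
      have := (Nat.cast_le (α := ℝ)).mpr hab
      linarith
    linarith
  have hdir : Directed (· ⊇ ·) Dn := fun a b =>
    ⟨max a b, hanti a (max a b) (le_max_left _ _), hanti b (max a b) (le_max_right _ _)⟩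
  have hioc : c ≤ μu (Ioc 0 t) := by
    rw [← hinter, hdir.measure_iInter (fun n => (measurableSet_Ioo).nullMeasurableSet)
      ⟨0, by
        rw [hμu _ measurableSet_Ioo]
        refine ne_top_of_le_ne_top hfin (lintegral_mono_set (Ioo_subset_Ioo le_rfl (by norm_num)))⟩]
    refine le_iInf fun n => ?_
    rw [hμu _ measurableSet_Ioo]
    refine hb _ ?_
    have h5 : (0:ℝ) < 1/(n+1) := by positivity
    linarith
  have hsing : μu {t} = 0 := by
    rw [hμudef, withDensity_apply _ (measurableSet_singleton t),
      setLIntegral_measure_zero _ _ (measure_singleton t)]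
  calc c ≤ μu (Ioc 0 t) := hioc
    _ ≤ μu (Ioo 0 t ∪ {t}) := measure_mono (fun x hx => by
        rcases lt_or_eq_of_le hx.2 with h | h
        · exact Or.inl ⟨hx.1, h⟩
        · exact Or.inr (by simp [h]))
    _ ≤ μu (Ioo 0 t) + μu {t} := measure_union_le _ _
    _ = ∫⁻ s in Ioo 0 t, u s ^ r := by
        rw [hsing, add_zero, hμu _ measurableSet_Ioo]


/-- Core upper bound. -/
lemma upper_core {p r : ℝ} (hr : 0 < r) (hrp : r ≤ p) (hp1 : p ≤ 1)
    {u h g : ℝ → ℝ≥0∞} (hu : Measurable u) (hh : Measurable h) (hg : Measurable g)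
    (hUpos : ∀ t : ℝ, 0 < t → 0 < (∫⁻ s in Ioo 0 t, u s ^ r))
    (hUfin : ∀ t : ℝ, 0 < t → (∫⁻ s in Ioo 0 t, u s ^ r) < ∞)
    {S : ℝ≥0∞}
    (hS : ∀ t : ℝ, 0 < t →
      wNorm (dualExp p) h (Ioo 0 t) ≤ S * (∫⁻ s in Ioo 0 t, u s ^ r) ^ (1/r)) :
    (∫⁻ x in Ioi (0:ℝ), h x ^ p * g x ^ p) ^ (1/p)
      ≤ (6:ℝ≥0∞) ^ (1/r) * S *
        (∫⁻ t in Ioi (0:ℝ), ((∫⁻ x in Ioi t, g x) * u t) ^ r) ^ (1/r) := by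
  classical
  have hp : 0 < p := lt_of_lt_of_le hr hrp
  set U : ℝ → ℝ≥0∞ := fun t => ∫⁻ s in Ioo 0 t, u s ^ r with hUdef
  have hUmono : Monotone U := fun a b hab =>
    lintegral_mono_set (Ioo_subset_Ioo le_rfl hab)
  have hUmeas : Measurable U := hUmono.measurable
  set G : ℝ → ℝ≥0∞ := fun t => ∫⁻ x in Ioi t, g x with hGdef
  have hGanti : Antitone G := fun a b hab => lintegral_mono_set (Ioi_subset_Ioi hab)
  set Xr : ℝ≥0∞ := ∫⁻ t in Ioi (0:ℝ), G t ^ r * u t ^ r with hXrdef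
  have hXr_eq : (∫⁻ t in Ioi (0:ℝ), (G t * u t) ^ r) = Xr :=
    lintegral_congr fun t => ENNReal.mul_rpow_of_nonneg _ _ hr.le
  set lam : ℤ → ℝ≥0∞ := fun k => (2:ℝ≥0∞) ^ k with hlamdef
  have h2ne0 : (2:ℝ≥0∞) ≠ 0 := by norm_num
  have h2netop : (2:ℝ≥0∞) ≠ ∞ := by norm_num
  have hlam0 : ∀ k, lam k ≠ 0 := fun k => (ENNReal.zpow_pos h2ne0 h2netop k).ne'
  have hlamtop : ∀ k, lam k ≠ ∞ := fun k => (zpow_lt_top h2ne0 h2netop k).ne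
  have hlammono : ∀ j k : ℤ, j ≤ k → lam j ≤ lam k := fun j k hjk =>
    ENNReal.zpow_le_of_le one_le_two hjk
  have hlamsucc : ∀ k, lam (k+1) = 2 * lam k := fun k => by
    show (2:ℝ≥0∞) ^ (k+1) = 2 * (2:ℝ≥0∞) ^ k
    rw [ENNReal.zpow_add h2ne0 h2netop k 1, zpow_one, mul_comm]
  have hlam4 : ∀ k : ℤ, lam (k+1) = 4 * lam (k-1) := fun k => by
    show (2:ℝ≥0∞) ^ (k+1) = 4 * (2:ℝ≥0∞) ^ (k-1)
    have hkk : k + 1 = (k-1) + 2 := by ring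
    rw [hkk, ENNReal.zpow_add h2ne0 h2netop (k-1) 2, mul_comm]
    congr 1
    rw [show ((2:ℤ)) = ((2:ℕ):ℤ) from rfl, zpow_natCast]
    norm_num
  set E : ℤ → Set ℝ := fun k => {x | 0 < x ∧ lam k ≤ U x ∧ U x < lam (k+1)} with hEdef
  have hEmeas : ∀ k, MeasurableSet (E k) := by
    intro k
    have : E k = Ioi 0 ∩ U ⁻¹' (Ico (lam k) (lam (k+1))) := by
      ext x; simp [hEdef, mem_Ico, and_assoc]
    rw [this]
    exact measurableSet_Ioi.inter (hUmeas measurableSet_Ico)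
  have hEdisj : Pairwise (Function.onFun Disjoint E) := by
    have key : ∀ j k : ℤ, j < k → Disjoint (E j) (E k) := by
      intro j k hjk
      rw [Set.disjoint_left]
      rintro x ⟨_, _, hxj⟩ ⟨_, hxk, _⟩
      exact absurd (hxj.trans_le ((hlammono (j+1) k (Int.lt_iff_add_one_le.mp hjk)).trans hxk))
        (lt_irrefl _)
    intro j k hjk
    rcases hjk.lt_or_gt with hc | hc
    · exact key j k hc
    · exact (key k j hc).symm
  have hEcover : Ioi (0:ℝ) = ⋃ k, E k := by
    ext x
    simp only [mem_Ioi, mem_iUnion]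
    constructor
    · intro hx
      obtain ⟨n, hn⟩ := ENNReal.exists_mem_Ico_zpow (hUpos x hx).ne' (hUfin x hx).ne
        one_lt_two h2netop
      exact ⟨n, hx, hn.1, hn.2⟩
    · rintro ⟨k, hk⟩
      exact hk.1
  set tk : ℤ → ℝ := fun k => sInf (E k) with htkdef
  have htk_lb : ∀ k, ∀ x ∈ E k, tk k ≤ x := fun k x hx =>
    csInf_le ⟨0, fun y hy => hy.1.le⟩ hx
  have htk_nn : ∀ k, (E k).Nonempty → 0 ≤ tk k := fun k hk =>
    le_csInf hk fun x hx => hx.1.le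
  set b : ℤ → ℝ≥0∞ := fun k =>
    if (E k).Nonempty then lam (k+1) * G (tk k) ^ r else 0 with hbdef
  set T : ℤ → ℝ≥0∞ := fun k => ∫⁻ x in E k, h x ^ p * g x ^ p with hTdef
  have hdecomp : (∫⁻ x in Ioi (0:ℝ), h x ^ p * g x ^ p) = ∑' k, T k := by
    rw [hEcover]
    exact lintegral_iUnion hEmeas hEdisj _
  -- per-term bound
  have hTb : ∀ k, T k ≤ S ^ p * b k ^ (p/r) := by
    intro k
    by_cases hne : (E k).Nonempty
    · rw [hbdef]
      simp only [if_pos hne]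
      have hsub : E k ⊆ {x | 0 < x ∧ U x < lam (k+1)} := fun x hx => ⟨hx.1, hx.2.2⟩
      have hwn : wNorm (dualExp p) h (E k) ≤ S * (lam (k+1)) ^ (1/r) :=
        (wNorm_mono_set _ _ hsub).trans (claim1 hp hp1 hr hu hh hS _)
      have hH := holder_local hp hp1 hh hg hwn
      have hIg : (∫⁻ x in E k, g x) ≤ G (tk k) := by
        calc (∫⁻ x in E k, g x) ≤ ∫⁻ x in Ici (tk k), g x :=
              lintegral_mono_set (fun x hx => htk_lb k x hx)
          _ = G (tk k) := setLIntegral_congr (Ioi_ae_eq_Ici.symm)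
      calc T k ≤ ((S * lam (k+1) ^ (1/r)) * ∫⁻ x in E k, g x) ^ p := hH
        _ ≤ ((S * lam (k+1) ^ (1/r)) * G (tk k)) ^ p :=
            ENNReal.rpow_le_rpow (mul_le_mul_right hIg _) hp.le
        _ = S ^ p * (lam (k+1) * G (tk k) ^ r) ^ (p/r) := by
            rw [mul_assoc, ENNReal.mul_rpow_of_nonneg _ _ hp.le]
            congr 1
            rw [ENNReal.mul_rpow_of_nonneg _ _ hp.le,
              ENNReal.mul_rpow_of_nonneg _ _ (div_nonneg hp.le hr.le)]
            congr 1
            · rw [← ENNReal.rpow_mul]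
              congr 1
              field_simp
            · rw [← ENNReal.rpow_mul]
              congr 1
              field_simp
    · rw [hbdef, hTdef]
      simp only [if_neg hne]
      rw [not_nonempty_iff_eq_empty] at hne
      rw [hne, Measure.restrict_empty, lintegral_zero_measure]
      exact zero_le
  -- Claim 2 : ∑ b ≤ 6 Xr
  have claim2 : ∑' k, b k ≤ 6 * Xr := by
    set c : ℤ → ℝ≥0∞ := fun k =>
      if (E k).Nonempty ∧ tk k = 0 then lam (k+1) * G 0 ^ r else 0 with hcdef
    set d : ℤ → ℝ≥0∞ := fun k =>
      if (E k).Nonempty ∧ 0 < tk k then lam (k+1) * G (tk k) ^ r else 0 with hddef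
    have hbcd : ∀ k, b k ≤ c k + d k := by
      intro k
      by_cases hne : (E k).Nonempty
      · rcases eq_or_lt_of_le (htk_nn k hne) with h0 | h0
        · have e1 : b k = lam (k+1) * G (tk k) ^ r := if_pos hne
          have e2 : c k = lam (k+1) * G 0 ^ r := if_pos ⟨hne, h0.symm⟩
          rw [e1, e2, ← h0]
          exact le_self_add
        · have e1 : b k = lam (k+1) * G (tk k) ^ r := if_pos hne
          have e2 : d k = lam (k+1) * G (tk k) ^ r := if_pos ⟨hne, h0⟩
          rw [e1, e2]
          exact le_add_self
      · have e1 : b k = 0 := if_neg hne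
        rw [e1]
        exact zero_le
    have hlow_of : ∀ k, (E k).Nonempty → tk k = 0 → ∀ x : ℝ, 0 < x → lam k ≤ U x := by
      intro k hne h0 x hx
      have htkx : tk k < x := by rw [h0]; exact hx
      obtain ⟨e, he, helt⟩ := exists_lt_of_csInf_lt hne htkx
      exact he.2.1.trans (hUmono helt.le)
    have hc : ∑' k, c k ≤ 2 * Xr := by
      by_cases hex : ∃ k, (E k).Nonempty ∧ tk k = 0
      · obtain ⟨k0, hk0⟩ := hex
        have hlow := hlow_of k0 hk0.1 hk0.2
        have huniq : ∀ j, j ≠ k0 → c j = 0 := by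
          intro j hj
          refine if_neg fun hcj => hj ?_
          have hlowj := hlow_of j hcj.1 hcj.2
          obtain ⟨e0, he0⟩ := hk0.1
          obtain ⟨ej, hej⟩ := hcj.1
          have h1 : lam j < lam (k0+1) := (hlowj e0 he0.1).trans_lt he0.2.2
          have h2 : lam k0 < lam (j+1) := (hlow ej hej.1).trans_lt hej.2.2
          have h3 : j < k0 + 1 := by
            by_contra hcon
            push_neg at hcon
            exact absurd (hlammono _ _ hcon) (not_le_of_gt h1)
          have h4 : k0 < j + 1 := by
            by_contra hcon
            push_neg at hcon
            exact absurd (hlammono _ _ hcon) (not_le_of_gt h2)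
          omega
        have ec : c k0 = lam (k0+1) * G 0 ^ r := if_pos hk0
        rw [tsum_eq_single k0 huniq, ec]
        have hbot := bottom_bound hr hu hg (lam := lam k0) hlow
        calc lam (k0+1) * G 0 ^ r = 2 * (lam k0 * G 0 ^ r) := by
              rw [hlamsucc, mul_assoc]
          _ ≤ 2 * Xr := mul_le_mul_right hbot 2
      · push_neg at hex
        have hall : ∀ k, c k = 0 := fun k =>
          if_neg fun hcon => absurd hcon.2 (hex k hcon.1)
        rw [tsum_congr hall, tsum_zero]
        exact zero_le
    have hd : ∑' k, d k ≤ 4 * Xr := by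
      set B : ℤ → Set ℝ := fun k => {x | x ∈ Ioc 0 (tk k) ∧ U x ≤ lam (k-1)} with hBdef
      set sig : ℤ → ℝ := fun k => sSup (B k) with hsigdef
      set J : ℤ → Set ℝ := fun k =>
        if (E k).Nonempty ∧ 0 < tk k then Ioc (sig k) (tk k) else ∅ with hJdef
      have hJmeas : ∀ k, MeasurableSet (J k) := by
        intro k
        by_cases hck : (E k).Nonempty ∧ 0 < tk k
        · have e : J k = Ioc (sig k) (tk k) := if_pos hck
          rw [e]; exact measurableSet_Ioc
        · have e : J k = ∅ := if_neg hck
          rw [e]; exact MeasurableSet.empty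
      -- main facts per k
      have hfacts : ∀ k, (E k).Nonempty ∧ 0 < tk k →
          (0 ≤ sig k ∧ sig k ≤ tk k) ∧
          (lam (k-1) ≤ (volume.withDensity (fun s => u s ^ r)) (Ioc (sig k) (tk k))) ∧
          (Ioc (sig k) (tk k) ⊆ {x | 0 < x ∧ lam (k-1) < U x ∧ U x ≤ lam k}) := by
        intro k ⟨hne, ht0⟩
        set μu := volume.withDensity (fun s => u s ^ r) with hμudef
        have hμu : ∀ s : Set ℝ, MeasurableSet s → μu s = ∫⁻ x in s, u x ^ r :=
          fun s hs => withDensity_apply _ hs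
        have ht0le : ∀ e ∈ E k, tk k ≤ e := htk_lb k
        -- (f1) U < lam k strictly below tk k
        have hUlt : ∀ x : ℝ, 0 < x → x < tk k → U x < lam k := by
          intro x hx hxt
          by_contra hcon
          push_neg at hcon
          obtain ⟨e, he⟩ := hne
          have hxe : x ≤ e := hxt.le.trans (ht0le e he)
          have hxE : x ∈ E k := ⟨hx, hcon, lt_of_le_of_lt (hUmono hxe) he.2.2⟩
          exact absurd (ht0le x hxE) (not_le_of_gt hxt)
        -- (f2) U (tk k) ≤ lam k
        have hUt0_le : U (tk k) ≤ lam k :=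
          Ulc hu ht0 (fun x hx hxt => (hUlt x hx hxt).le)
        -- (f3) lam k ≤ μu (Ioc 0 (tk k))  via right continuity
        have hUt0_ge : lam k ≤ U (tk k) := by
          refine Urc hu ht0 (hUfin _ (by linarith)).ne fun x hx => ?_
          obtain ⟨e, he, helt⟩ := exists_lt_of_csInf_lt hne hx
          exact he.2.1.trans (hUmono helt.le)
        -- sigma facts
        have hsig_nn : 0 ≤ sig k := by
          rcases (B k).eq_empty_or_nonempty with hBe | hBne
          · have hs0 : sig k = 0 := by show sSup (B k) = 0; rw [hBe]; exact Real.sSup_empty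
            rw [hs0]
          · obtain ⟨x, hx⟩ := hBne
            have hbdd : BddAbove (B k) := ⟨tk k, fun y hy => hy.1.2⟩
            exact hx.1.1.le.trans (le_csSup hbdd hx)
        have hsig_le : sig k ≤ tk k := by
          rcases (B k).eq_empty_or_nonempty with hBe | hBne
          · have hs0 : sig k = 0 := by show sSup (B k) = 0; rw [hBe]; exact Real.sSup_empty
            rw [hs0]; exact ht0.le
          · exact csSup_le hBne fun x hx => hx.1.2
        -- (f4) μu (Ioc 0 (sig k)) ≤ lam (k-1)
        have hsigB : μu (Ioc 0 (sig k)) ≤ lam (k-1) := by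
          rcases (B k).eq_empty_or_nonempty with hBe | hBne
          · have hs0 : sig k = 0 := by show sSup (B k) = 0; rw [hBe]; exact Real.sSup_empty
            rw [hs0]
            simp
          · have hσpos : 0 < sig k := by
              obtain ⟨x, hx⟩ := hBne
              have hbdd : BddAbove (B k) := ⟨tk k, fun y hy => hy.1.2⟩
              exact lt_of_lt_of_le hx.1.1 (le_csSup hbdd hx)
            have hUxb : ∀ x : ℝ, 0 < x → x < sig k → U x ≤ lam (k-1) := by
              intro x hx hxσ
              obtain ⟨bb, hbb, hlt⟩ := exists_lt_of_lt_csSup hBne hxσ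
              exact (hUmono hlt.le).trans hbb.2
            have hUσ : U (sig k) ≤ lam (k-1) := Ulc hu hσpos hUxb
            calc μu (Ioc 0 (sig k)) ≤ μu (Ioo 0 (sig k) ∪ {sig k}) :=
                  measure_mono (fun x hx => by
                    rcases lt_or_eq_of_le hx.2 with hlt | heq
                    · exact Or.inl ⟨hx.1, hlt⟩
                    · exact Or.inr (by simp [heq]))
              _ ≤ μu (Ioo 0 (sig k)) + μu {sig k} := measure_union_le _ _
              _ = U (sig k) := by
                  rw [hμudef, withDensity_apply _ (measurableSet_singleton _),
                    setLIntegral_measure_zero _ _ (measure_singleton _), add_zero,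
                    hμu _ measurableSet_Ioo]
              _ ≤ lam (k-1) := hUσ
        -- (f5) mass bound
        have hmass : lam (k-1) ≤ μu (Ioc (sig k) (tk k)) := by
          have hsplit : μu (Ioc 0 (tk k)) = μu (Ioc 0 (sig k)) + μu (Ioc (sig k) (tk k)) := by
            rw [← measure_union (Set.Ioc_disjoint_Ioc_of_le le_rfl) measurableSet_Ioc,
              Ioc_union_Ioc_eq_Ioc hsig_nn hsig_le]
          have hup : lam k ≤ μu (Ioc 0 (tk k)) := by
            calc lam k ≤ U (tk k) := hUt0_ge
              _ = μu (Ioo 0 (tk k)) := (hμu _ measurableSet_Ioo).symm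
              _ ≤ μu (Ioc 0 (tk k)) := measure_mono Ioo_subset_Ioc_self
          have h2lam : lam (k-1) + lam (k-1) = lam k := by
            have : k = (k-1) + 1 := by ring
            rw [this, hlamsucc, two_mul]
            ring_nf
          have hchain : lam (k-1) + lam (k-1) ≤ lam (k-1) + μu (Ioc (sig k) (tk k)) := by
            rw [h2lam]
            calc lam k ≤ μu (Ioc 0 (tk k)) := hup
              _ = μu (Ioc 0 (sig k)) + μu (Ioc (sig k) (tk k)) := hsplit
              _ ≤ lam (k-1) + μu (Ioc (sig k) (tk k)) := add_le_add_left hsigB _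
          exact (ENNReal.add_le_add_iff_left (hlamtop _)).mp hchain
        -- (f7) inclusion in the disjoint bands
        have hband : Ioc (sig k) (tk k) ⊆ {x | 0 < x ∧ lam (k-1) < U x ∧ U x ≤ lam k} := by
          rintro x ⟨hx1, hx2⟩
          have hx0 : 0 < x := lt_of_le_of_lt hsig_nn hx1
          refine ⟨hx0, ?_, (hUmono hx2).trans hUt0_le⟩
          by_contra hcon
          push_neg at hcon
          have hxB : x ∈ B k := ⟨⟨hx0, hx2⟩, hcon⟩
          have hbdd : BddAbove (B k) := ⟨tk k, fun y hy => hy.1.2⟩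
          exact absurd (le_csSup hbdd hxB) (not_le_of_gt hx1)
        exact ⟨⟨hsig_nn, hsig_le⟩, hmass, hband⟩
      -- per-k d bound
      have hdk : ∀ k, d k ≤ 4 * ∫⁻ x in J k, G x ^ r * u x ^ r := by
        intro k
        by_cases hck : (E k).Nonempty ∧ 0 < tk k
        · have ed : d k = lam (k+1) * G (tk k) ^ r := if_pos hck
          have eJ : J k = Ioc (sig k) (tk k) := if_pos hck
          rw [ed, eJ]
          obtain ⟨⟨hs1, hs2⟩, hmass, hband⟩ := hfacts k hck
          have hmain : G (tk k) ^ r * lam (k-1) ≤ ∫⁻ x in Ioc (sig k) (tk k), G x ^ r * u x ^ r := by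
            calc G (tk k) ^ r * lam (k-1)
                ≤ G (tk k) ^ r * (volume.withDensity (fun s => u s ^ r)) (Ioc (sig k) (tk k)) :=
                  mul_le_mul_right hmass _
              _ = G (tk k) ^ r * ∫⁻ x in Ioc (sig k) (tk k), u x ^ r := by
                  rw [withDensity_apply _ measurableSet_Ioc]
              _ = ∫⁻ x in Ioc (sig k) (tk k), G (tk k) ^ r * u x ^ r :=
                  (lintegral_const_mul _ (hu.pow_const r)).symm
              _ ≤ ∫⁻ x in Ioc (sig k) (tk k), G x ^ r * u x ^ r := by
                  refine lintegral_mono_ae ((ae_restrict_iff' measurableSet_Ioc).mpr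
                    (ae_of_all _ fun x hx => ?_))
                  exact mul_le_mul_left (ENNReal.rpow_le_rpow (hGanti hx.2) hr.le) _
          calc lam (k+1) * G (tk k) ^ r = 4 * (G (tk k) ^ r * lam (k-1)) := by
                rw [hlam4 k]
                ring
            _ ≤ 4 * ∫⁻ x in Ioc (sig k) (tk k), G x ^ r * u x ^ r :=
                mul_le_mul_right hmain 4
        · have ed : d k = 0 := if_neg hck
          rw [ed]
          exact zero_le
      have hJdisj : Pairwise (Function.onFun Disjoint J) := by
        have key : ∀ j k : ℤ, j < k → Disjoint (J j) (J k) := by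
          intro j k hjk
          by_cases hcj : (E j).Nonempty ∧ 0 < tk j
          · by_cases hck : (E k).Nonempty ∧ 0 < tk k
            · have ej : J j = Ioc (sig j) (tk j) := if_pos hcj
              have ek : J k = Ioc (sig k) (tk k) := if_pos hck
              rw [ej, ek]
              obtain ⟨_, _, hbandj⟩ := hfacts j hcj
              obtain ⟨_, _, hbandk⟩ := hfacts k hck
              rw [Set.disjoint_left]
              intro x hxj hxk
              have h1 := (hbandj hxj).2.2
              have h2 := (hbandk hxk).2.1
              have h3 : lam j ≤ lam (k-1) := hlammono _ _ (by omega)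
              exact absurd (h1.trans h3) (not_le_of_gt h2)
            · have ek : J k = ∅ := if_neg hck
              rw [ek]; exact disjoint_empty _
          · have ej : J j = ∅ := if_neg hcj
            rw [ej]; exact empty_disjoint _
        intro j k hjk
        rcases hjk.lt_or_gt with hc2 | hc2
        · exact key j k hc2
        · exact (key k j hc2).symm
      have hJsub : (⋃ k, J k) ⊆ Ioi (0:ℝ) := by
        refine iUnion_subset fun k => ?_
        by_cases hck : (E k).Nonempty ∧ 0 < tk k
        · have e : J k = Ioc (sig k) (tk k) := if_pos hck
          rw [e]
          obtain ⟨⟨hs1, _⟩, _, _⟩ := hfacts k hck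
          exact fun x hx => lt_of_le_of_lt hs1 hx.1
        · have e : J k = ∅ := if_neg hck
          rw [e]; exact empty_subset _
      calc ∑' k, d k ≤ ∑' k, 4 * ∫⁻ x in J k, G x ^ r * u x ^ r :=
            ENNReal.tsum_le_tsum hdk
        _ = 4 * ∑' k, ∫⁻ x in J k, G x ^ r * u x ^ r := ENNReal.tsum_mul_left
        _ = 4 * ∫⁻ x in ⋃ k, J k, G x ^ r * u x ^ r := by
            rw [lintegral_iUnion hJmeas hJdisj]
        _ ≤ 4 * Xr := mul_le_mul_right (lintegral_mono_set hJsub) 4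
    calc ∑' k, b k ≤ ∑' k, (c k + d k) := ENNReal.tsum_le_tsum hbcd
      _ = (∑' k, c k) + ∑' k, d k := ENNReal.tsum_add
      _ ≤ 2 * Xr + 4 * Xr := add_le_add hc hd
      _ = 6 * Xr := by ring
  -- assemble
  have hpr1 : (1:ℝ) ≤ p / r := (one_le_div hr).mpr hrp
  calc (∫⁻ x in Ioi (0:ℝ), h x ^ p * g x ^ p) ^ (1/p)
      = (∑' k, T k) ^ (1/p) := by rw [hdecomp]
    _ ≤ (∑' k, S ^ p * b k ^ (p/r)) ^ (1/p) :=
        ENNReal.rpow_le_rpow (ENNReal.tsum_le_tsum hTb) (by positivity)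
    _ = (S ^ p * ∑' k, b k ^ (p/r)) ^ (1/p) := by rw [ENNReal.tsum_mul_left]
    _ ≤ (S ^ p * (∑' k, b k) ^ (p/r)) ^ (1/p) :=
        ENNReal.rpow_le_rpow (mul_le_mul_right (aux_tsum_rpow hpr1 b) _) (by positivity)
    _ ≤ (S ^ p * (6 * Xr) ^ (p/r)) ^ (1/p) :=
        ENNReal.rpow_le_rpow (mul_le_mul_right
          (ENNReal.rpow_le_rpow claim2 (by positivity)) _) (by positivity)
    _ = (6:ℝ≥0∞) ^ (1/r) * S * (∫⁻ t in Ioi (0:ℝ), (G t * u t) ^ r) ^ (1/r) := by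
        rw [hXr_eq]
        rw [ENNReal.mul_rpow_of_nonneg _ _ (by positivity : (0:ℝ) ≤ 1/p),
          ← ENNReal.rpow_mul S, mul_one_div_cancel hp.ne', ENNReal.rpow_one,
          ← ENNReal.rpow_mul (6 * Xr)]
        have hexp : p / r * (1/p) = 1/r := by field_simp
        rw [hexp, ENNReal.mul_rpow_of_nonneg _ _ (by positivity : (0:ℝ) ≤ 1/r)]
        ring

/-- Tonelli swap for the Cesàro collapse. -/
lemma tonelli_swap {ψ wp : ℝ → ℝ≥0∞} (hψ : Measurable ψ) (hwp : Measurable wp) :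
    ∫⁻ t in Ioi (0:ℝ), (∫⁻ x in Ioo 0 t, ψ x) * wp t
      = ∫⁻ x in Ioi (0:ℝ), ψ x * ∫⁻ t in Ioi x, wp t := by
  set μ0 := volume.restrict (Ioi (0:ℝ)) with hμ0
  have hs1 : ∀ t : ℝ, (∫⁻ x in Ioo 0 t, ψ x) * wp t = ∫⁻ x in Ioo 0 t, ψ x * wp t :=
    fun t => (lintegral_mul_const _ hψ).symm
  have hs2 : ∀ t : ℝ, (∫⁻ x in Ioo 0 t, ψ x * wp t) =
      ∫⁻ x, (Iio t).indicator (fun x => ψ x * wp t) x ∂μ0 := by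
    intro t
    rw [lintegral_indicator measurableSet_Iio, hμ0, Measure.restrict_restrict measurableSet_Iio]
    congr 1
    rw [inter_comm, Ioi_inter_Iio]
  have hswap : ∫⁻ t, ∫⁻ x, (Iio t).indicator (fun x => ψ x * wp t) x ∂μ0 ∂μ0
      = ∫⁻ x, ∫⁻ t, (Iio t).indicator (fun x => ψ x * wp t) x ∂μ0 ∂μ0 := by
    apply lintegral_lintegral_swap
    apply Measurable.aemeasurable
    have : (Function.uncurry fun t x => (Iio t).indicator (fun x => ψ x * wp t) x)
        = {q : ℝ × ℝ | q.2 < q.1}.indicator (fun q => ψ q.2 * wp q.1) := by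
      ext q
      rcases q with ⟨t, x⟩
      simp only [Function.uncurry, Set.indicator_apply, mem_Iio, mem_setOf_eq]
    rw [this]
    exact ((hψ.comp measurable_snd).mul (hwp.comp measurable_fst)).indicator
      (measurableSet_lt measurable_snd measurable_fst)
  have hs3 : ∀ x : ℝ, x ∈ Ioi (0:ℝ) →
      (∫⁻ t, (Iio t).indicator (fun x => ψ x * wp t) x ∂μ0) = ψ x * ∫⁻ t in Ioi x, wp t := by
    intro x hx
    have h1 : ∀ t : ℝ, (Iio t).indicator (fun x => ψ x * wp t) x
        = (Ioi x).indicator (fun t => ψ x * wp t) t := by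
      intro t
      simp only [Set.indicator_apply, mem_Iio, mem_Ioi]
    calc (∫⁻ t, (Iio t).indicator (fun x => ψ x * wp t) x ∂μ0)
        = ∫⁻ t, (Ioi x).indicator (fun t => ψ x * wp t) t ∂μ0 := by
          exact lintegral_congr h1
      _ = ∫⁻ t in Ioi x, ψ x * wp t ∂μ0 := lintegral_indicator measurableSet_Ioi _
      _ = ∫⁻ t in Ioi x, ψ x * wp t := by
          rw [hμ0, Measure.restrict_restrict measurableSet_Ioi,
            inter_eq_left.mpr (Ioi_subset_Ioi hx.le)]
      _ = ψ x * ∫⁻ t in Ioi x, wp t := lintegral_const_mul _ hwp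
  calc ∫⁻ t in Ioi (0:ℝ), (∫⁻ x in Ioo 0 t, ψ x) * wp t
      = ∫⁻ t, ∫⁻ x, (Iio t).indicator (fun x => ψ x * wp t) x ∂μ0 ∂μ0 := by
        rw [hμ0]
        refine lintegral_congr fun t => ?_
        rw [hs1 t, hs2 t]
      _ = ∫⁻ x, ∫⁻ t, (Iio t).indicator (fun x => ψ x * wp t) x ∂μ0 ∂μ0 := hswap
      _ = ∫⁻ x in Ioi (0:ℝ), ψ x * ∫⁻ t in Ioi x, wp t :=
        setLIntegral_congr_fun measurableSet_Ioi hs3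

/-- Collapse of the Cesàro functional with `q = p`. -/
lemma cesaro_collapse {p : ℝ} (hp : 0 < p) {w v φ : ℝ → ℝ≥0∞}
    (hw : Measurable w) (hv : Measurable v) (hφ : Measurable φ) :
    cesaroNorm (ENNReal.ofReal p) (ENNReal.ofReal p) w v φ
      = (∫⁻ x in Ioi (0:ℝ), φ x ^ p * ((∫⁻ s in Ioi x, w s ^ p) * v x ^ p)) ^ (1/p) := by
  have hne : (ENNReal.ofReal p) ≠ ∞ := ENNReal.ofReal_ne_top
  unfold cesaroNorm
  rw [wNorm_ne_top hne, ENNReal.toReal_ofReal hp.le]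
  congr 1
  calc ∫⁻ t in Ioi (0:ℝ), (wNorm (ENNReal.ofReal p) (fun x => φ x * v x) (Ioo 0 t) * w t) ^ p
      = ∫⁻ t in Ioi (0:ℝ), (∫⁻ x in Ioo 0 t, (φ x * v x) ^ p) * w t ^ p := by
        refine lintegral_congr fun t => ?_
        rw [wNorm_ne_top hne, ENNReal.toReal_ofReal hp.le,
          ENNReal.mul_rpow_of_nonneg _ _ hp.le, ← ENNReal.rpow_mul,
          one_div_mul_cancel hp.ne', ENNReal.rpow_one]
    _ = ∫⁻ x in Ioi (0:ℝ), (φ x * v x) ^ p * ∫⁻ t in Ioi x, w t ^ p :=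
        tonelli_swap ((hφ.mul hv).pow_const p) (hw.pow_const p)
    _ = ∫⁻ x in Ioi (0:ℝ), φ x ^ p * ((∫⁻ s in Ioi x, w s ^ p) * v x ^ p) := by
        refine lintegral_congr fun x => ?_
        rw [ENNReal.mul_rpow_of_nonneg _ _ hp.le]
        ring

/-- The Copson functional formula. -/
lemma copson_formula {r : ℝ} (hr : 0 < r) (u g : ℝ → ℝ≥0∞) :
    copsonNorm 1 (ENNReal.ofReal r) u (fun _ => 1) g
      = (∫⁻ t in Ioi (0:ℝ), ((∫⁻ x in Ioi t, g x) * u t) ^ r) ^ (1/r) := by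
  have hne : (ENNReal.ofReal r) ≠ ∞ := ENNReal.ofReal_ne_top
  unfold copsonNorm
  rw [wNorm_ne_top hne, ENNReal.toReal_ofReal hr.le]
  congr 1
  refine lintegral_congr fun t => ?_
  congr 2
  rw [wNorm_ne_top one_ne_top]
  simp [ENNReal.toReal_ofReal]


lemma iSup_min_natCast (a : ℝ≥0∞) : ⨆ n : ℕ, min a (n:ℝ≥0∞) = a := by
  apply le_antisymm (iSup_le fun n => min_le_left _ _)
  rcases eq_or_ne a ∞ with ha | ha
  · subst ha
    rw [show (⨆ n : ℕ, min ∞ (n:ℝ≥0∞)) = ⨆ n : ℕ, (n:ℝ≥0∞) from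
      iSup_congr fun n => min_eq_right le_top, ENNReal.iSup_natCast]
  · obtain ⟨m, hm⟩ := ENNReal.exists_nat_gt ha
    exact le_iSup_of_le m (by rw [min_eq_left hm.le])

/-- Copson norm bound for functions supported in `(0,t)`. -/
lemma copson_indicator_bound {r : ℝ} (hr : 0 < r) {u F : ℝ → ℝ≥0∞} (hu : Measurable u)
    (hF : Measurable F) {t : ℝ} :
    (∫⁻ s in Ioi (0:ℝ), ((∫⁻ x in Ioi s, (Ioo 0 t).indicator F x) * u s) ^ r) ^ (1/r)
      ≤ (∫⁻ x in Ioo 0 t, F x) * (∫⁻ s in Ioo 0 t, u s ^ r) ^ (1/r) := by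
  set A := ∫⁻ x in Ioo 0 t, F x with hAdef
  have hpt : ∀ s : ℝ, s ∈ Ioi (0:ℝ) →
      ((∫⁻ x in Ioi s, (Ioo 0 t).indicator F x) * u s) ^ r
        ≤ (Ioo 0 t).indicator (fun s => (A * u s) ^ r) s := by
    intro s hs
    by_cases hst : s < t
    · have hmem : s ∈ Ioo 0 t := ⟨hs, hst⟩
      rw [Set.indicator_of_mem hmem]
      refine ENNReal.rpow_le_rpow (mul_le_mul_left ?_ _) hr.le
      calc (∫⁻ x in Ioi s, (Ioo 0 t).indicator F x)
          ≤ ∫⁻ x, (Ioo 0 t).indicator F x := setLIntegral_le_lintegral _ _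
        _ = A := lintegral_indicator measurableSet_Ioo _
    · push_neg at hst
      have hz : (∫⁻ x in Ioi s, (Ioo 0 t).indicator F x) = 0 := by
        rw [setLIntegral_congr_fun measurableSet_Ioi (
          fun x (hx : x ∈ Ioi s) => Set.indicator_of_notMem
            (fun hmem => (lt_asymm (hst.trans_lt hx)) hmem.2) F)]
        exact lintegral_zero
      rw [hz, zero_mul, ENNReal.zero_rpow_of_pos hr]
      exact zero_le
  calc (∫⁻ s in Ioi (0:ℝ), ((∫⁻ x in Ioi s, (Ioo 0 t).indicator F x) * u s) ^ r) ^ (1/r)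
      ≤ (∫⁻ s in Ioi (0:ℝ), (Ioo 0 t).indicator (fun s => (A * u s) ^ r) s) ^ (1/r) :=
        ENNReal.rpow_le_rpow (lintegral_mono_ae
          ((ae_restrict_iff' measurableSet_Ioi).mpr (ae_of_all _ hpt))) (by positivity)
    _ = (∫⁻ s in Ioo 0 t, (A * u s) ^ r) ^ (1/r) := by
        rw [lintegral_indicator measurableSet_Ioo,
          Measure.restrict_restrict measurableSet_Ioo,
          inter_eq_left.mpr Ioo_subset_Ioi_self]
    _ = (A ^ r * ∫⁻ s in Ioo 0 t, u s ^ r) ^ (1/r) := by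
        rw [← lintegral_const_mul (A ^ r) (hu.pow_const r)]
        congr 1
        exact lintegral_congr fun s => ENNReal.mul_rpow_of_nonneg _ _ hr.le
    _ = A * (∫⁻ s in Ioo 0 t, u s ^ r) ^ (1/r) := by
        rw [ENNReal.mul_rpow_of_nonneg _ _ (by positivity : (0:ℝ) ≤ 1/r),
          ← ENNReal.rpow_mul, mul_one_div_cancel hr.ne', ENNReal.rpow_one]

/-- Multipliers from `Cop_r(u)` to `Ces_{p,p}(w,v)` for `0 < r ≤ p ≤ 1`, `r ≠ 1`:
`‖f‖_{M(Cop_r(u), Ces_{p,p}(w,v))} ≈ sup_{t>0} (∫_0^t u^r)^{−1/r} ‖f·ω₂‖_{p',(0,t)}`,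
where `ω₂(x) = (∫_x^∞ w^p)^{1/p} v(x)`, with constants depending only on `p` and `r`. -/
theorem multiplier_q_eq_p_r_le_p (p r : ℝ) (hr : 0 < r) (hrp : r ≤ p) (hp1 : p ≤ 1)
    (hr1 : r ≠ 1) :
    ∃ c C : ℝ≥0∞, 0 < c ∧ c < ∞ ∧ 0 < C ∧ C < ∞ ∧
      ∀ u v w : ℝ → ℝ≥0∞, IsWeightOn v → MemOmegaDual (ENNReal.ofReal r) u →
        MemOmega (ENNReal.ofReal p) w →
        ∀ f : ℝ → ℝ≥0∞, Measurable f →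
          let ω₂ : ℝ → ℝ≥0∞ := fun x => (∫⁻ s in Ioi x, w s ^ p) ^ (1 / p) * v x
          let lhs := multNorm (copsonNorm 1 (ENNReal.ofReal r) u (fun _ => 1))
            (cesaroNorm (ENNReal.ofReal p) (ENNReal.ofReal p) w v) f
          let rhs := ⨆ t ∈ Ioi (0:ℝ),
            (∫⁻ s in Ioo (0:ℝ) t, u s ^ r) ^ (-(1 / r)) *
              wNorm (dualExp p) (fun x => f x * ω₂ x) (Ioo 0 t)
          c * rhs ≤ lhs ∧ lhs ≤ C * rhs := by
  have hp : 0 < p := lt_of_lt_of_le hr hrp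
  refine ⟨1, (6:ℝ≥0∞) ^ (1/r), zero_lt_one, one_lt_top,
    ENNReal.rpow_pos (by norm_num) (by norm_num),
    ENNReal.rpow_lt_top_of_nonneg (by positivity) (by norm_num), ?_⟩
  intro u v w hv hu hw f hf
  intro ω₂ lhs rhs
  obtain ⟨humeas, huU⟩ := hu
  obtain ⟨hwmeas, -⟩ := hw
  obtain ⟨hvmeas, -⟩ := hv
  have hUpf : ∀ t : ℝ, 0 < t →
      0 < (∫⁻ s in Ioo 0 t, u s ^ r) ∧ (∫⁻ s in Ioo 0 t, u s ^ r) < ∞ := by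
    intro t ht
    obtain ⟨h1, h2⟩ := huU t ht
    rw [wNorm_ne_top ENNReal.ofReal_ne_top, ENNReal.toReal_ofReal hr.le] at h1 h2
    constructor
    · by_contra hc
      push_neg at hc
      have h0 : (∫⁻ s in Ioo 0 t, u s ^ r) = 0 := le_antisymm hc zero_le
      rw [h0, ENNReal.zero_rpow_of_pos (by positivity)] at h1
      exact absurd h1 (lt_irrefl 0)
    · by_contra hc
      push_neg at hc
      have h0 : (∫⁻ s in Ioo 0 t, u s ^ r) = ∞ := le_antisymm le_top hc
      rw [h0, ENNReal.top_rpow_of_pos (by positivity)] at h2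
      exact absurd h2 (lt_irrefl ∞)
  have hUpos : ∀ t : ℝ, 0 < t → 0 < (∫⁻ s in Ioo 0 t, u s ^ r) := fun t ht => (hUpf t ht).1
  have hUfin : ∀ t : ℝ, 0 < t → (∫⁻ s in Ioo 0 t, u s ^ r) < ∞ := fun t ht => (hUpf t ht).2
  have hω₂ : Measurable ω₂ := by
    show Measurable fun x => (∫⁻ s in Ioi x, w s ^ p) ^ (1/p) * v x
    have hWanti : Antitone (fun x => ∫⁻ s in Ioi x, w s ^ p) := fun a b hab =>
      lintegral_mono_set (Ioi_subset_Ioi hab)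
    exact (hWanti.measurable.pow_const (1/p)).mul hvmeas
  set h : ℝ → ℝ≥0∞ := fun x => f x * ω₂ x with hhdef
  have hhm : Measurable h := hf.mul hω₂
  have hint : ∀ (g : ℝ → ℝ≥0∞) (x : ℝ),
      (f x * g x) ^ p * ((∫⁻ s in Ioi x, w s ^ p) * v x ^ p) = h x ^ p * g x ^ p := by
    intro g x
    have hh2 : h x ^ p = f x ^ p * ((∫⁻ s in Ioi x, w s ^ p) * v x ^ p) := by
      show (f x * ((∫⁻ s in Ioi x, w s ^ p) ^ (1/p) * v x)) ^ p = _
      rw [ENNReal.mul_rpow_of_nonneg _ _ hp.le, ENNReal.mul_rpow_of_nonneg _ _ hp.le,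
        ← ENNReal.rpow_mul, one_div_mul_cancel hp.ne', ENNReal.rpow_one]
    rw [ENNReal.mul_rpow_of_nonneg _ _ hp.le, hh2]
    ring
  have hYeq : ∀ g : ℝ → ℝ≥0∞, Measurable g →
      cesaroNorm (ENNReal.ofReal p) (ENNReal.ofReal p) w v (fun x => f x * g x)
        = (∫⁻ x in Ioi (0:ℝ), h x ^ p * g x ^ p) ^ (1/p) := by
    intro g hg
    rw [cesaro_collapse hp hwmeas hvmeas (φ := fun x => f x * g x) (hf.mul hg)]
    congr 1
    exact lintegral_congr fun x => hint g x
  have hS : ∀ t : ℝ, 0 < t →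
      wNorm (dualExp p) h (Ioo 0 t) ≤ rhs * (∫⁻ s in Ioo 0 t, u s ^ r) ^ (1/r) := by
    intro t ht
    have hIpos := hUpos t ht
    have hIfin := hUfin t ht
    have hIr0 : (∫⁻ s in Ioo 0 t, u s ^ r) ^ (1/r) ≠ 0 :=
      (ENNReal.rpow_pos hIpos hIfin.ne).ne'
    have hIrtop : (∫⁻ s in Ioo 0 t, u s ^ r) ^ (1/r) ≠ ∞ :=
      (ENNReal.rpow_lt_top_of_nonneg (by positivity) hIfin.ne).ne
    have hterm : (∫⁻ s in Ioo 0 t, u s ^ r) ^ (-(1/r)) * wNorm (dualExp p) h (Ioo 0 t)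
        ≤ rhs :=
      le_iSup₂ (f := fun (t : ℝ) (_ : t ∈ Ioi (0:ℝ)) =>
        (∫⁻ s in Ioo (0:ℝ) t, u s ^ r) ^ (-(1 / r)) *
          wNorm (dualExp p) (fun x => f x * ω₂ x) (Ioo 0 t)) t ht
    calc wNorm (dualExp p) h (Ioo 0 t)
        = ((∫⁻ s in Ioo 0 t, u s ^ r) ^ (-(1/r)) * wNorm (dualExp p) h (Ioo 0 t)) *
            (∫⁻ s in Ioo 0 t, u s ^ r) ^ (1/r) := by
          rw [ENNReal.rpow_neg, mul_comm ((∫⁻ s in Ioo 0 t, u s ^ r) ^ (1/r))⁻¹,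
            mul_assoc, ENNReal.inv_mul_cancel hIr0 hIrtop, mul_one]
      _ ≤ rhs * (∫⁻ s in Ioo 0 t, u s ^ r) ^ (1/r) := mul_le_mul_left hterm _
  have hle_lhs : ∀ g : ℝ → ℝ≥0∞, Measurable g →
      ¬(∀ᵐ x ∂volume.restrict (Ioi (0:ℝ)), g x = 0) →
      (∫⁻ x in Ioi (0:ℝ), h x ^ p * g x ^ p) ^ (1/p) /
        (∫⁻ s in Ioi (0:ℝ), ((∫⁻ x in Ioi s, g x) * u s) ^ r) ^ (1/r) ≤ lhs := by
    intro g hg hnt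
    have hterm : cesaroNorm (ENNReal.ofReal p) (ENNReal.ofReal p) w v (fun x => f x * g x) /
        copsonNorm 1 (ENNReal.ofReal r) u (fun _ => 1) g ≤ lhs :=
      le_iSup₂ (f := fun (g : ℝ → ℝ≥0∞)
        (_ : Measurable g ∧ ¬ (∀ᵐ x ∂(volume.restrict (Ioi (0:ℝ))), g x = 0)) =>
        cesaroNorm (ENNReal.ofReal p) (ENNReal.ofReal p) w v (fun x => f x * g x) /
          copsonNorm 1 (ENNReal.ofReal r) u (fun _ => 1) g) g ⟨hg, hnt⟩
    rwa [hYeq g hg, copson_formula hr u g] at hterm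
  constructor
  · -- lower bound
    rw [one_mul]
    refine iSup₂_le fun t ht => ?_
    have ht' : (0:ℝ) < t := ht
    show (∫⁻ s in Ioo (0:ℝ) t, u s ^ r) ^ (-(1 / r)) * wNorm (dualExp p) h (Ioo 0 t) ≤ lhs
    set I := (∫⁻ s in Ioo (0:ℝ) t, u s ^ r) with hIdef
    have hIpos : 0 < I := hUpos t ht'
    have hIfin : I < ∞ := hUfin t ht'
    have hIr0 : I ^ (1/r) ≠ 0 := (ENNReal.rpow_pos hIpos hIfin.ne).ne'
    have hIrtop : I ^ (1/r) ≠ ∞ :=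
      (ENNReal.rpow_lt_top_of_nonneg (by positivity) hIfin.ne).ne
    rcases eq_or_lt_of_le hp1 with hpeq | hplt
    · -- p = 1
      subst hpeq
      rw [dualExp_one, wNorm_top]
      set N := essSup h (volume.restrict (Ioo 0 t)) with hNdef
      have hb : ∀ bnd : ℝ≥0∞, bnd < N → I ^ (-(1/r)) * bnd ≤ lhs := by
        intro bnd hbnd
        set Eb := {x | x ∈ Ioo 0 t ∧ bnd < h x} with hEbdef
        have hEbmeas : MeasurableSet Eb :=
          measurableSet_Ioo.inter (hhm measurableSet_Ioi)
        have hEbsub : Eb ⊆ Ioo 0 t := fun x hx => hx.1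
        have hmpos : 0 < volume Eb := by
          by_contra hc
          push_neg at hc
          have h0 : volume Eb = 0 := le_antisymm hc zero_le
          have hae : ∀ᵐ x ∂(volume.restrict (Ioo 0 t)), h x ≤ bnd := by
            rw [ae_iff, Measure.restrict_apply (by
              have hset : {a : ℝ | ¬ h a ≤ bnd} = {a | bnd < h a} := by ext a; simp
              rw [hset]
              exact hhm measurableSet_Ioi)]
            refine measure_mono_null ?_ h0
            rintro x ⟨hx1, hx2⟩
            exact ⟨hx2, by simpa using hx1⟩
          have hcon2 : N ≤ bnd := essSup_le_of_ae_le bnd hae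
          exact absurd (hbnd.trans_le hcon2) (lt_irrefl bnd)
        have hmfin : volume Eb < ∞ :=
          lt_of_le_of_lt (measure_mono hEbsub)
            (by rw [Real.volume_Ioo]; exact ENNReal.ofReal_lt_top)
        set g : ℝ → ℝ≥0∞ := Eb.indicator (fun _ => 1) with hgdef
        have hgm : Measurable g := measurable_const.indicator hEbmeas
        have hgint : ∀ s : Set ℝ, MeasurableSet s → (∫⁻ x in s, g x) = volume (Eb ∩ s) := by
          intro s hs
          rw [hgdef]
          rw [lintegral_indicator hEbmeas, setLIntegral_one, Measure.restrict_apply hEbmeas]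
        have hnt : ¬(∀ᵐ x ∂volume.restrict (Ioi (0:ℝ)), g x = 0) := by
          intro hae
          have h0 : (∫⁻ x in Ioi (0:ℝ), g x) = 0 := by
            calc (∫⁻ x in Ioi (0:ℝ), g x) = ∫⁻ _ in Ioi (0:ℝ), 0 := lintegral_congr_ae hae
              _ = 0 := lintegral_zero
          rw [hgint _ measurableSet_Ioi,
            inter_eq_left.mpr (show Eb ⊆ Ioi (0:ℝ) from fun x hx => (hEbsub hx).1)] at h0
          exact absurd h0 hmpos.ne'
        have hY : bnd * volume Eb ≤ ∫⁻ x in Ioi (0:ℝ), h x ^ (1:ℝ) * g x ^ (1:ℝ) := by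
          have hpt : ∀ x, h x ^ (1:ℝ) * g x ^ (1:ℝ) = Eb.indicator h x := by
            intro x
            rw [ENNReal.rpow_one, ENNReal.rpow_one, hgdef]
            by_cases hx : x ∈ Eb
            · rw [Set.indicator_of_mem hx, Set.indicator_of_mem hx, mul_one]
            · rw [Set.indicator_of_notMem hx, Set.indicator_of_notMem hx, mul_zero]
          rw [lintegral_congr hpt, lintegral_indicator hEbmeas,
            Measure.restrict_restrict hEbmeas,
            inter_eq_left.mpr (show Eb ⊆ Ioi (0:ℝ) from fun x hx => (hEbsub hx).1)]
          calc bnd * volume Eb = ∫⁻ _ in Eb, bnd := (setLIntegral_const _ _).symm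
            _ ≤ ∫⁻ x in Eb, h x := lintegral_mono_ae ((ae_restrict_iff' hEbmeas).mpr
                (ae_of_all _ fun x hx => hx.2.le))
        have hX : (∫⁻ s in Ioi (0:ℝ), ((∫⁻ x in Ioi s, g x) * u s) ^ r) ^ (1/r)
            ≤ volume Eb * I ^ (1/r) := by
          have hgind : g = (Ioo 0 t).indicator g := by
            rw [hgdef, Set.indicator_indicator, inter_eq_right.mpr hEbsub]
          have hcb := copson_indicator_bound hr humeas hgm (t := t)
          rw [← hgind, hgint _ measurableSet_Ioo, inter_eq_left.mpr hEbsub] at hcb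
          exact hcb
        have hfin := hle_lhs g hgm hnt
        refine le_trans ?_ hfin
        calc I ^ (-(1/r)) * bnd = (bnd * volume Eb) / (volume Eb * I ^ (1/r)) := by
              rw [mul_comm bnd (volume Eb), ENNReal.mul_div_mul_left _ _ hmpos.ne' hmfin.ne,
                ENNReal.rpow_neg, div_eq_mul_inv]
              exact mul_comm _ _
          _ ≤ (∫⁻ x in Ioi (0:ℝ), h x ^ (1:ℝ) * g x ^ (1:ℝ)) ^ ((1:ℝ)/1) /
                (∫⁻ s in Ioi (0:ℝ), ((∫⁻ x in Ioi s, g x) * u s) ^ r) ^ (1/r) := by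
              refine ENNReal.div_le_div ?_ hX
              rw [show (1:ℝ)/1 = 1 by norm_num, ENNReal.rpow_one]
              exact hY
      have h2 : ∀ bnd, bnd < N → bnd ≤ I ^ (1/r) * lhs := by
        intro bnd hbnd
        have h3 := hb bnd hbnd
        calc bnd = I ^ (1/r) * (I ^ (-(1/r)) * bnd) := by
              rw [ENNReal.rpow_neg, ← mul_assoc, ENNReal.mul_inv_cancel hIr0 hIrtop, one_mul]
          _ ≤ I ^ (1/r) * lhs := mul_le_mul_right h3 _
      have hNle : N ≤ I ^ (1/r) * lhs := by
        by_contra hc2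
        push_neg at hc2
        obtain ⟨bnd, hb1, hb2⟩ := exists_between hc2
        exact absurd (h2 bnd hb2) (not_le_of_gt hb1)
      calc I ^ (-(1/r)) * N ≤ I ^ (-(1/r)) * (I ^ (1/r) * lhs) := mul_le_mul_right hNle _
        _ = lhs := by
            rw [ENNReal.rpow_neg, ← mul_assoc, ENNReal.inv_mul_cancel hIr0 hIrtop, one_mul]
    · -- p < 1
      set q : ℝ := p/(1-p) with hqdef
      have h1p : 0 < 1 - p := by linarith
      have hq : 0 < q := div_pos hp h1p
      rw [dualExp_lt_one hplt, wNorm_ne_top ENNReal.ofReal_ne_top,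
        ENNReal.toReal_ofReal hq.le]
      set A : ℕ → ℝ≥0∞ := fun n => ∫⁻ x in Ioo 0 t, (min (h x) (n:ℝ≥0∞)) ^ q with hAdef
      have hAmeas : ∀ n : ℕ, Measurable fun x => (min (h x) (n:ℝ≥0∞)) ^ q := fun n =>
        (hhm.min measurable_const).pow_const q
      have hAfin : ∀ n : ℕ, A n < ∞ := by
        intro n
        calc A n ≤ ∫⁻ _ in Ioo 0 t, (n:ℝ≥0∞) ^ q := lintegral_mono fun x =>
              ENNReal.rpow_le_rpow (min_le_right _ _) hq.le
          _ = (n:ℝ≥0∞) ^ q * volume (Ioo 0 t) := setLIntegral_const _ _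
          _ < ∞ := ENNReal.mul_lt_top
              (ENNReal.rpow_lt_top_of_nonneg hq.le (ENNReal.natCast_ne_top n))
              (by rw [Real.volume_Ioo]; exact ENNReal.ofReal_lt_top)
      have hAsup : (⨆ n, A n) = ∫⁻ x in Ioo 0 t, h x ^ q := by
        have hmono : Monotone (fun (n : ℕ) (x : ℝ) => (min (h x) (n:ℝ≥0∞)) ^ q) :=
          fun a b hab x =>
            ENNReal.rpow_le_rpow (min_le_min le_rfl (Nat.cast_le.mpr hab)) hq.le
        rw [hAdef, ← lintegral_iSup hAmeas hmono]
        refine lintegral_congr fun x => ?_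
        rw [← aux_rpow_iSup hq (fun n => min (h x) (n:ℝ≥0∞)), iSup_min_natCast]
      have hn : ∀ n : ℕ, I ^ (-(1/r)) * (A n) ^ (1/q) ≤ lhs := by
        intro n
        by_cases hA0 : A n = 0
        · rw [hA0, ENNReal.zero_rpow_of_pos (by positivity), mul_zero]
          exact zero_le
        set F : ℝ → ℝ≥0∞ := fun x => (min (h x) (n:ℝ≥0∞)) ^ q with hFdef
        set g : ℝ → ℝ≥0∞ := (Ioo 0 t).indicator F with hgdef
        have hFm : Measurable F := hAmeas n
        have hgm : Measurable g := hFm.indicator measurableSet_Ioo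
        have hAg : (∫⁻ x in Ioi (0:ℝ), g x) = A n := by
          rw [hgdef, lintegral_indicator measurableSet_Ioo,
            Measure.restrict_restrict measurableSet_Ioo,
            inter_eq_left.mpr Ioo_subset_Ioi_self, hAdef]
        have hnt : ¬(∀ᵐ x ∂volume.restrict (Ioi (0:ℝ)), g x = 0) := by
          intro hae
          have h0 : (∫⁻ x in Ioi (0:ℝ), g x) = 0 := by
            calc (∫⁻ x in Ioi (0:ℝ), g x) = ∫⁻ _ in Ioi (0:ℝ), 0 := lintegral_congr_ae hae
              _ = 0 := lintegral_zero
          rw [hAg] at h0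
          exact hA0 h0
        have hY : A n ≤ ∫⁻ x in Ioi (0:ℝ), h x ^ p * g x ^ p := by
          have hqpq : q = p + q * p := by
            rw [hqdef]
            field_simp
            ring
          have hpt : ∀ x, (Ioo 0 t).indicator F x ≤ h x ^ p * g x ^ p := by
            intro x
            by_cases hx : x ∈ Ioo 0 t
            · rw [Set.indicator_of_mem hx, hgdef, Set.indicator_of_mem hx, hFdef]
              calc (min (h x) (n:ℝ≥0∞)) ^ q = (min (h x) (n:ℝ≥0∞)) ^ (p + q * p) := by
                    rw [← hqpq]
                _ = (min (h x) (n:ℝ≥0∞)) ^ p * (min (h x) (n:ℝ≥0∞)) ^ (q * p) :=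
                    ENNReal.rpow_add_of_nonneg _ _ hp.le (by positivity)
                _ ≤ h x ^ p * ((min (h x) (n:ℝ≥0∞)) ^ q) ^ p := by
                    refine mul_le_mul (ENNReal.rpow_le_rpow (min_le_left _ _) hp.le)
                      ?_ zero_le zero_le
                    rw [← ENNReal.rpow_mul]
            · rw [Set.indicator_of_notMem hx]
              exact zero_le
          calc A n = ∫⁻ x in Ioi (0:ℝ), (Ioo 0 t).indicator F x := by
                rw [lintegral_indicator measurableSet_Ioo,
                  Measure.restrict_restrict measurableSet_Ioo,
                  inter_eq_left.mpr Ioo_subset_Ioi_self, hAdef]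
            _ ≤ ∫⁻ x in Ioi (0:ℝ), h x ^ p * g x ^ p := lintegral_mono hpt
        have hX : (∫⁻ s in Ioi (0:ℝ), ((∫⁻ x in Ioi s, g x) * u s) ^ r) ^ (1/r)
            ≤ A n * I ^ (1/r) := by
          have hcb := copson_indicator_bound hr humeas hFm (t := t)
          rw [← hgdef] at hcb
          have hFA : (∫⁻ x in Ioo 0 t, F x) = A n := rfl
          rw [hFA] at hcb
          exact hcb
        have hfin := hle_lhs g hgm hnt
        refine le_trans ?_ hfin
        have hAfin' : A n ≠ ∞ := (hAfin n).ne
        calc I ^ (-(1/r)) * A n ^ (1/q)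
            = (A n) ^ ((1:ℝ)/p) / (A n * I ^ (1/r)) := by
              rw [show (1:ℝ)/p = 1/q + 1 by rw [hqdef]; field_simp; ring]
              rw [ENNReal.rpow_add _ _ hA0 hAfin', ENNReal.rpow_one]
              rw [mul_comm (A n ^ ((1:ℝ)/q)) (A n),
                ENNReal.mul_div_mul_left _ _ hA0 hAfin']
              rw [ENNReal.rpow_neg, div_eq_mul_inv]
              exact mul_comm _ _
          _ ≤ (∫⁻ x in Ioi (0:ℝ), h x ^ p * g x ^ p) ^ (1/p) /
                (∫⁻ s in Ioi (0:ℝ), ((∫⁻ x in Ioi s, g x) * u s) ^ r) ^ (1/r) :=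
              ENNReal.div_le_div (ENNReal.rpow_le_rpow hY (by positivity)) hX
      calc I ^ (-(1/r)) * (∫⁻ x in Ioo 0 t, h x ^ q) ^ (1/q)
          = I ^ (-(1/r)) * (⨆ n, A n) ^ (1/q) := by rw [hAsup]
        _ = ⨆ n, I ^ (-(1/r)) * (A n) ^ (1/q) := by
            rw [aux_rpow_iSup (by positivity : (0:ℝ) < 1/q) A, ENNReal.mul_iSup]
        _ ≤ lhs := iSup_le hn
  · -- upper bound
    refine iSup₂_le fun g hg => ?_
    refine ENNReal.div_le_of_le_mul ?_
    rw [hYeq g hg.1, copson_formula hr u g]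
    exact upper_core hr hrp hp1 humeas hhm hg.1 hUpos hUfin hS

end AuxMult
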